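/- If A and B are real symmetric n×n matrices that are both positive semidefinite, then A and B are simultaneously diagonalizable via congruence; that is, there exists a nonsingular real matrix P such that both PᵀAP and PᵀBP are diagonal. -/

import Mathlib

open Matrix

private theorem sdc_conj_eq_diag {n : ℕ} (Q X : Matrix (Fin n) (Fin n) ℝ) (hQ : Qᵀ * Q = 1)
    (c : Fin n → ℝ) (h : ∀ j, X *ᵥ (fun i => Q i j) = c j • fun i => Q i j) :
    Qᵀ * X * Q = Matrix.diagonal c := by
  have hXQ : X * Q = Q * Matrix.diagonal c := by
    ext i j
    have h1 := congrFun (h j) i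
    simp only [mulVec, dotProduct, Pi.smul_apply, smul_eq_mul] at h1
    rw [Matrix.mul_diagonal, Matrix.mul_apply, h1, mul_comm]
  rw [Matrix.mul_assoc, hXQ, ← Matrix.mul_assoc, hQ, Matrix.one_mul]

private theorem sdc_psd_row_zero {n : ℕ} {X : Matrix (Fin n) (Fin n) ℝ} (hX : X.PosSemidef)
    (i : Fin n) (h : X i i = 0) : ∀ j, X i j = 0 := by
  have h0 : X *ᵥ Pi.single i 1 = 0 := by
    rw [← hX.dotProduct_mulVec_zero_iff]
    simp [mulVec, dotProduct, Pi.single_apply, h]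
  intro j
  have hji : X j i = 0 := by
    have := congrFun h0 j
    simpa [mulVec, dotProduct, Pi.single_apply] using this
  rw [← hX.1.apply i j]
  simpa using hji

private theorem sdc_psd_diag_nonneg {n : ℕ} {X : Matrix (Fin n) (Fin n) ℝ} (hX : X.PosSemidef)
    (i : Fin n) : 0 ≤ X i i := by
  have := hX.dotProduct_mulVec_nonneg (Pi.single i 1)
  simpa [mulVec, dotProduct, Pi.single_apply] using this

/-- If two real symmetric matrices are both positive semidefinite, they are
simultaneously diagonalizable via congruence. -/
theorem psd_pair_sdc {n : ℕ} (A B : Matrix (Fin n) (Fin n) ℝ)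
    (hA : A.PosSemidef) (hB : B.PosSemidef) :
    ∃ P : Matrix (Fin n) (Fin n) ℝ, IsUnit P.det ∧
      (Pᵀ * A * P).IsDiag ∧ (Pᵀ * B * P).IsDiag := by
  classical
  have hC : (A + B).PosSemidef := hA.add hB
  set d : Fin n → ℝ := hC.1.eigenvalues with hd
  have hd0 : ∀ i, 0 ≤ d i := hC.eigenvalues_nonneg
  set U : Matrix (Fin n) (Fin n) ℝ := (hC.1.eigenvectorUnitary : Matrix (Fin n) (Fin n) ℝ)
    with hUdef
  have hUU : Uᵀ * U = 1 := by
    rw [hUdef, ← Matrix.conjTranspose_eq_transpose_of_trivial, ← Matrix.star_eq_conjTranspose]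
    exact Unitary.coe_star_mul_self hC.1.eigenvectorUnitary
  have hspec : Uᵀ * (A + B) * U = diagonal d := by
    have h := hC.1.conjStarAlgAut_star_eigenvectorUnitary
    rw [Unitary.conjStarAlgAut_star_apply] at h
    rw [Matrix.star_eq_conjTranspose, Matrix.conjTranspose_eq_transpose_of_trivial] at h
    exact h
  set s : Fin n → ℝ := fun i => if d i = 0 then 1 else (Real.sqrt (d i))⁻¹ with hs
  have hs0 : ∀ i, s i ≠ 0 := by
    intro i
    by_cases hdi : d i = 0
    · simp [hs, hdi]
    · have hpos : 0 < d i := lt_of_le_of_ne (hd0 i) (Ne.symm hdi)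
      simp [hs, hdi, inv_ne_zero, (Real.sqrt_ne_zero' ).mpr hpos]
  set P₁ : Matrix (Fin n) (Fin n) ℝ := U * diagonal s with hP₁
  set e : Fin n → ℝ := fun i => if d i = 0 then 0 else 1 with he
  have key : ∀ X : Matrix (Fin n) (Fin n) ℝ,
      P₁ᵀ * X * P₁ = diagonal s * (Uᵀ * X * U) * diagonal s := by
    intro X
    rw [hP₁]
    simp only [transpose_mul, diagonal_transpose, Matrix.mul_assoc]
  have hfun : ∀ i, s i * d i * s i = e i := by
    intro i
    by_cases hdi : d i = 0
    · simp [hs, he, hdi]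
    · have hpos : 0 < d i := lt_of_le_of_ne (hd0 i) (Ne.symm hdi)
      have hsq : Real.sqrt (d i) * Real.sqrt (d i) = d i := Real.mul_self_sqrt (hd0 i)
      have hsne : Real.sqrt (d i) ≠ 0 := (Real.sqrt_ne_zero').mpr hpos
      rw [hs, he]
      simp only [if_neg hdi]
      field_simp
      rw [Real.sq_sqrt (hd0 i)]
  have hE : P₁ᵀ * (A + B) * P₁ = diagonal e := by
    rw [key, hspec, diagonal_mul_diagonal, diagonal_mul_diagonal]
    exact congrArg diagonal (funext fun i => by simpa [Pi.mul_apply] using hfun i)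
  set A' : Matrix (Fin n) (Fin n) ℝ := P₁ᵀ * A * P₁ with hA'def
  set B' : Matrix (Fin n) (Fin n) ℝ := P₁ᵀ * B * P₁ with hB'def
  have hA' : A'.PosSemidef := by
    have := hA.conjTranspose_mul_mul_same P₁
    rwa [Matrix.conjTranspose_eq_transpose_of_trivial] at this
  have hB' : B'.PosSemidef := by
    have := hB.conjTranspose_mul_mul_same P₁
    rwa [Matrix.conjTranspose_eq_transpose_of_trivial] at this
  have hsum : A' + B' = diagonal e := by
    rw [hA'def, hB'def, ← hE]
    rw [Matrix.mul_add, Matrix.add_mul]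
  have hEpsd : (diagonal e).PosSemidef := by
    refine posSemidef_diagonal_iff.mpr fun i => ?_
    by_cases hdi : d i = 0 <;> simp [he, hdi]
  set M : Matrix (Fin n) (Fin n) ℝ := A' + diagonal e with hM
  have hMpsd : M.PosSemidef := hA'.add hEpsd
  set lam : Fin n → ℝ := hMpsd.1.eigenvalues with hlam
  set v : Fin n → (Fin n → ℝ) := fun j => ⇑(hMpsd.1.eigenvectorBasis j) with hv
  have hMv : ∀ j, M *ᵥ v j = lam j • v j := fun j => hMpsd.1.mulVec_eigenvectorBasis j
  -- rows of A' vanish where e vanishes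
  have hrow : ∀ i, e i = 0 → ∀ k, A' i k = 0 := by
    intro i hi k
    refine sdc_psd_row_zero hA' i ?_ k
    have h1 : A' i i + B' i i = 0 := by
      have := congrFun (congrFun hsum i) i
      simpa [Matrix.add_apply, Matrix.diagonal_apply_eq, hi] using this
    have h2 := sdc_psd_diag_nonneg hA' i
    have h3 := sdc_psd_diag_nonneg hB' i
    linarith
  -- eigenvector claims
  have claimE : ∀ j, diagonal e *ᵥ v j = (if lam j = 0 then (0:ℝ) else 1) • v j := by
    intro j
    by_cases h0 : lam j = 0
    · have hMv0 : M *ᵥ v j = 0 := by rw [hMv j, h0, zero_smul]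
      have hdot : star (v j) ⬝ᵥ (M *ᵥ v j) = 0 := by rw [hMv0, dotProduct_zero]
      rw [hM, add_mulVec, dotProduct_add] at hdot
      have ha := hA'.dotProduct_mulVec_nonneg (v j)
      have hb := hEpsd.dotProduct_mulVec_nonneg (v j)
      have hz : star (v j) ⬝ᵥ (diagonal e *ᵥ v j) = 0 := by linarith
      rw [hEpsd.dotProduct_mulVec_zero_iff] at hz
      rw [hz, h0, if_pos rfl, zero_smul]
    · have hvi : ∀ i, e i = 0 → v j i = 0 := by
        intro i hi
        have h1 := congrFun (hMv j) i
        rw [hM] at h1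
        simp only [add_mulVec, Pi.add_apply, Pi.smul_apply, smul_eq_mul,
          mulVec_diagonal, hi, zero_mul, add_zero] at h1
        have h2 : (A' *ᵥ v j) i = 0 := by
          simp only [mulVec, dotProduct]
          exact Finset.sum_eq_zero fun k _ => by rw [hrow i hi k, zero_mul]
        rw [h2] at h1
        exact (mul_eq_zero.mp h1.symm).resolve_left h0
      funext i
      by_cases hdi : d i = 0
      · have hei : e i = 0 := by simp [he, hdi]
        simp [mulVec_diagonal, hei, hvi i hei, h0]
      · have hei : e i = 1 := by simp [he, hdi]
        simp [mulVec_diagonal, hei, h0]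
  have claimA : ∀ j, A' *ᵥ v j = (if lam j = 0 then (0:ℝ) else lam j - 1) • v j := by
    intro j
    have h1 : A' *ᵥ v j = M *ᵥ v j - diagonal e *ᵥ v j := by
      rw [hM, add_mulVec]; abel
    rw [h1, hMv j, claimE j]
    by_cases h0 : lam j = 0
    · simp [h0]
    · simp only [h0, if_neg, ite_false]
      rw [sub_smul, one_smul]
  have claimB : ∀ j, B' *ᵥ v j =
      ((if lam j = 0 then (0:ℝ) else 1) - (if lam j = 0 then (0:ℝ) else lam j - 1)) • v j := by
    intro j
    have hB'eq : B' = diagonal e - A' := by rw [← hsum]; abel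
    rw [hB'eq, sub_mulVec, claimA j, claimE j, sub_smul]
  -- second congruence
  set Q : Matrix (Fin n) (Fin n) ℝ := (hMpsd.1.eigenvectorUnitary : Matrix (Fin n) (Fin n) ℝ)
    with hQdef
  have hQcol : ∀ j, (fun i => Q i j) = v j := by
    intro j; funext i
    rw [hQdef]
    exact hMpsd.1.eigenvectorUnitary_apply i j
  have hQQ : Qᵀ * Q = 1 := by
    rw [hQdef, ← Matrix.conjTranspose_eq_transpose_of_trivial, ← Matrix.star_eq_conjTranspose]
    exact Unitary.coe_star_mul_self hMpsd.1.eigenvectorUnitary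
  have dA : Qᵀ * A' * Q = diagonal (fun j => if lam j = 0 then (0:ℝ) else lam j - 1) :=
    sdc_conj_eq_diag Q A' hQQ _ (fun j => by rw [hQcol j]; exact claimA j)
  have dB : Qᵀ * B' * Q = diagonal (fun j =>
      (if lam j = 0 then (0:ℝ) else 1) - (if lam j = 0 then (0:ℝ) else lam j - 1)) :=
    sdc_conj_eq_diag Q B' hQQ _ (fun j => by rw [hQcol j]; exact claimB j)
  refine ⟨P₁ * Q, ?_, ?_, ?_⟩
  · rw [isUnit_iff_ne_zero, Matrix.det_mul, hP₁, Matrix.det_mul, Matrix.det_diagonal]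
    have hdU : U.det ≠ 0 := by
      intro h
      have := congrArg Matrix.det hUU
      rw [Matrix.det_mul, Matrix.det_transpose, h, mul_zero, Matrix.det_one] at this
      exact zero_ne_one this
    have hdQ : Q.det ≠ 0 := by
      intro h
      have := congrArg Matrix.det hQQ
      rw [Matrix.det_mul, Matrix.det_transpose, h, mul_zero, Matrix.det_one] at this
      exact zero_ne_one this
    have hds : (∏ i, s i) ≠ 0 := Finset.prod_ne_zero_iff.mpr fun i _ => hs0 i
    exact mul_ne_zero (mul_ne_zero hdU hds) hdQ
  · have : (P₁ * Q)ᵀ * A * (P₁ * Q) = Qᵀ * A' * Q := by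
      rw [hA'def, transpose_mul]
      simp only [Matrix.mul_assoc]
    rw [this, dA]
    exact isDiag_diagonal _
  · have : (P₁ * Q)ᵀ * B * (P₁ * Q) = Qᵀ * B' * Q := by
      rw [hB'def, transpose_mul]
      simp only [Matrix.mul_assoc]
    rw [this, dB]
    exact isDiag_diagonal _
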